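/- For every 2D grid function ω in W_h one has ‖ω‖_E ≤ (2√3/3)·‖ω‖ and (2/3)·‖ω‖ ≤ ‖ω‖_F ≤ (4/3)·‖ω‖. -/
import Mathlib


open Finset

noncomputable section

/-- spatial mesh size `1/(2J)` -/
def msh (J : ℕ) : ℝ := 1 / (2 * (J : ℝ))

/-- 2D discrete inner product -/
def gridIP2 (J₁ J₂ : ℕ) (ω ν : ℕ → ℕ → ℝ) : ℝ :=
  msh J₁ * msh J₂ *
    ∑ i ∈ Finset.Icc 1 (2 * J₁ - 1), ∑ j ∈ Finset.Icc 1 (2 * J₂ - 1), ω i j * ν i j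

/-- 2D discrete `L²` norm -/
def gridNorm2 (J₁ J₂ : ℕ) (ω : ℕ → ℕ → ℝ) : ℝ :=
  Real.sqrt (gridIP2 J₁ J₂ ω ω)

/-- the 2D norm `‖ω‖_E` -/
def gridNormE (J₁ J₂ : ℕ) (ω : ℕ → ℕ → ℝ) : ℝ :=
  2 / 3 * Real.sqrt (msh J₁ * msh J₂ *
    ∑ i ∈ Finset.Icc 1 J₁, ∑ j ∈ Finset.Icc 1 J₂,
      (ω (2 * i - 2) (2 * j - 1) ^ 2 + ω (2 * i - 1) (2 * j - 2) ^ 2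
        + 3 * ω (2 * i - 1) (2 * j - 1) ^ 2))

/-- the 2D norm `‖ω‖_F = √((4/9)‖ω‖² + ‖ω‖_E²)` -/
def gridNormF (J₁ J₂ : ℕ) (ω : ℕ → ℕ → ℝ) : ℝ :=
  Real.sqrt (4 / 9 * gridNorm2 J₁ J₂ ω ^ 2 + gridNormE J₁ J₂ ω ^ 2)

/-- compact operator `𝒜` in the `x`-direction (interior formula) -/
def cA2 (ω : ℕ → ℕ → ℝ) (i j : ℕ) : ℝ := (ω (i + 1) j + 10 * ω i j + ω (i - 1) j) / 12

/-- compact operator `ℬ` in the `y`-direction (interior formula) -/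
def cB2 (ω : ℕ → ℕ → ℝ) (i j : ℕ) : ℝ := (ω i (j + 1) + 10 * ω i j + ω i (j - 1)) / 12

/-- compact operator `ℋ = 𝒜ℬ` -/
def cH (ω : ℕ → ℕ → ℝ) : ℕ → ℕ → ℝ := cA2 (cB2 ω)

/-- second difference `δ_xδ_x̄` -/
def dxx2 (J₁ : ℕ) (ω : ℕ → ℕ → ℝ) (i j : ℕ) : ℝ :=
  (ω (i + 1) j - 2 * ω i j + ω (i - 1) j) / msh J₁ ^ 2

/-- second difference `δ_yδ_ȳ` -/
def dyy2 (J₂ : ℕ) (ω : ℕ → ℕ → ℝ) (i j : ℕ) : ℝ :=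
  (ω i (j + 1) - 2 * ω i j + ω i (j - 1)) / msh J₂ ^ 2

/-- compact discrete Laplacian `Φ = ℬδ_xδ_x̄ + 𝒜δ_yδ_ȳ` -/
def cPhi (J₁ J₂ : ℕ) (ω : ℕ → ℕ → ℝ) (i j : ℕ) : ℝ :=
  cB2 (dxx2 J₁ ω) i j + cA2 (dyy2 J₂ ω) i j

/-- membership in `W_h`: vanishing on the boundary indices -/
def memWh (J₁ J₂ : ℕ) (ω : ℕ → ℕ → ℝ) : Prop :=
  ∀ i j : ℕ, (i = 0 ∨ i = 2 * J₁ ∨ j = 0 ∨ j = 2 * J₂) → ω i j = 0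

theorem key (J₁ J₂ : ℕ) (ω : ℕ → ℕ → ℝ) (hω : memWh J₁ J₂ ω) :
    ∑ i ∈ Icc 1 J₁, ∑ j ∈ Icc 1 J₂,
      (ω (2*i-2) (2*j-1)^2 + ω (2*i-1) (2*j-2)^2 + ω (2*i-1) (2*j-1)^2)
    ≤ ∑ i ∈ Icc 1 (2*J₁-1), ∑ j ∈ Icc 1 (2*J₂-1), ω i j ^2 := by
  set g : ℕ × ℕ → ℝ := fun p => ω p.1 p.2 ^ 2 with hg
  have hgnn : ∀ p, 0 ≤ g p := fun p => sq_nonneg _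
  set C : Finset (ℕ × ℕ) := Icc 1 J₁ ×ˢ Icc 1 J₂ with hC
  set F : Finset (ℕ × ℕ) := Icc 1 (2*J₁-1) ×ˢ Icc 1 (2*J₂-1) with hF
  set f₁ : ℕ × ℕ → ℕ × ℕ := fun p => (2*p.1-2, 2*p.2-1) with hf₁
  set f₂ : ℕ × ℕ → ℕ × ℕ := fun p => (2*p.1-1, 2*p.2-2) with hf₂
  set f₃ : ℕ × ℕ → ℕ × ℕ := fun p => (2*p.1-1, 2*p.2-1) with hf₃
  have hLHS : ∑ i ∈ Icc 1 J₁, ∑ j ∈ Icc 1 J₂,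
      (ω (2*i-2) (2*j-1)^2 + ω (2*i-1) (2*j-2)^2 + ω (2*i-1) (2*j-1)^2)
      = ∑ p ∈ C, (g (f₁ p) + g (f₂ p) + g (f₃ p)) := by
    rw [← Finset.sum_product']
  have hRHS : ∑ i ∈ Icc 1 (2*J₁-1), ∑ j ∈ Icc 1 (2*J₂-1), ω i j ^2 = ∑ p ∈ F, g p := by
    rw [← Finset.sum_product']
  rw [hLHS, hRHS, Finset.sum_add_distrib, Finset.sum_add_distrib]
  have inj₁ : Set.InjOn f₁ C := by
    intro a ha b hb hab
    simp only [hC, Finset.coe_product, Set.mem_prod, Finset.coe_Icc, Set.mem_Icc] at ha hb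
    simp only [hf₁, Prod.ext_iff] at hab ⊢
    omega
  have inj₂ : Set.InjOn f₂ C := by
    intro a ha b hb hab
    simp only [hC, Finset.coe_product, Set.mem_prod, Finset.coe_Icc, Set.mem_Icc] at ha hb
    simp only [hf₂, Prod.ext_iff] at hab ⊢
    omega
  have inj₃ : Set.InjOn f₃ C := by
    intro a ha b hb hab
    simp only [hC, Finset.coe_product, Set.mem_prod, Finset.coe_Icc, Set.mem_Icc] at ha hb
    simp only [hf₃, Prod.ext_iff] at hab ⊢
    omega
  rw [← Finset.sum_image inj₁, ← Finset.sum_image inj₂, ← Finset.sum_image inj₃]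
  have hd12 : Disjoint (C.image f₁) (C.image f₂) := by
    rw [Finset.disjoint_left]
    rintro p hp1 hp2
    simp only [Finset.mem_image, hC, Finset.mem_product, Finset.mem_Icc, hf₁, hf₂,
      Prod.ext_iff] at hp1 hp2
    obtain ⟨a, ⟨ha1, ha2⟩, ha3, ha4⟩ := hp1
    obtain ⟨b, ⟨hb1, hb2⟩, hb3, hb4⟩ := hp2
    omega
  have hd13 : Disjoint (C.image f₁) (C.image f₃) := by
    rw [Finset.disjoint_left]
    rintro p hp1 hp2
    simp only [Finset.mem_image, hC, Finset.mem_product, Finset.mem_Icc, hf₁, hf₃,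
      Prod.ext_iff] at hp1 hp2
    obtain ⟨a, ⟨ha1, ha2⟩, ha3, ha4⟩ := hp1
    obtain ⟨b, ⟨hb1, hb2⟩, hb3, hb4⟩ := hp2
    omega
  have hd23 : Disjoint (C.image f₂) (C.image f₃) := by
    rw [Finset.disjoint_left]
    rintro p hp1 hp2
    simp only [Finset.mem_image, hC, Finset.mem_product, Finset.mem_Icc, hf₂, hf₃,
      Prod.ext_iff] at hp1 hp2
    obtain ⟨a, ⟨ha1, ha2⟩, ha3, ha4⟩ := hp1
    obtain ⟨b, ⟨hb1, hb2⟩, hb3, hb4⟩ := hp2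
    omega
  rw [add_assoc, ← Finset.sum_union hd23, ← Finset.sum_union (by
    rw [Finset.disjoint_union_right]; exact ⟨hd12, hd13⟩)]
  set U : Finset (ℕ × ℕ) := C.image f₁ ∪ (C.image f₂ ∪ C.image f₃) with hU
  have hzero : ∀ p ∈ U, p ∉ U ∩ F → g p = 0 := by
    intro p hpU hpF
    have hpF' : p ∉ F := fun h => hpF (Finset.mem_inter.mpr ⟨hpU, h⟩)
    simp only [hU, Finset.mem_union, Finset.mem_image, hC, Finset.mem_product,
      Finset.mem_Icc, hf₁, hf₂, hf₃, Prod.ext_iff] at hpU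
    simp only [hF, Finset.mem_product, Finset.mem_Icc, not_and_or, not_and, not_le] at hpF'
    have : p.1 = 0 ∨ p.2 = 0 := by
      rcases hpU with ⟨a, ⟨h1, h2⟩, h3, h4⟩ | ⟨a, ⟨h1, h2⟩, h3, h4⟩ | ⟨a, ⟨h1, h2⟩, h3, h4⟩ <;> omega
    rcases this with h | h
    · have := hω p.1 p.2 (Or.inl h)
      simp [hg, this]
    · have := hω p.1 p.2 (Or.inr (Or.inr (Or.inl h)))
      simp [hg, this]
  calc ∑ p ∈ U, g p = ∑ p ∈ U ∩ F, g p :=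
        (Finset.sum_subset Finset.inter_subset_left hzero).symm
    _ ≤ ∑ p ∈ F, g p :=
        Finset.sum_le_sum_of_subset_of_nonneg Finset.inter_subset_right
          (fun p _ _ => hgnn p)

/-- For every 2D grid function `ω ∈ W_h`,
`‖ω‖_E ≤ (2√3/3)‖ω‖` and `(2/3)‖ω‖ ≤ ‖ω‖_F ≤ (4/3)‖ω‖`. -/
theorem stmt_14 (J₁ J₂ : ℕ) (hJ₁ : 0 < J₁) (hJ₂ : 0 < J₂)
    (ω : ℕ → ℕ → ℝ) (hω : memWh J₁ J₂ ω) :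
    gridNormE J₁ J₂ ω ≤ 2 * Real.sqrt 3 / 3 * gridNorm2 J₁ J₂ ω ∧
      2 / 3 * gridNorm2 J₁ J₂ ω ≤ gridNormF J₁ J₂ ω ∧
      gridNormF J₁ J₂ ω ≤ 4 / 3 * gridNorm2 J₁ J₂ ω := by
  have hh : (0:ℝ) ≤ msh J₁ * msh J₂ := by
    unfold msh; positivity
  set h := msh J₁ * msh J₂ with hhdef
  set T : ℝ := ∑ i ∈ Icc 1 (2*J₁-1), ∑ j ∈ Icc 1 (2*J₂-1), ω i j ^ 2 with hTdef
  have hT : 0 ≤ T :=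
    Finset.sum_nonneg fun i _ => Finset.sum_nonneg fun j _ => sq_nonneg _
  set S : ℝ := ∑ i ∈ Icc 1 J₁, ∑ j ∈ Icc 1 J₂,
      (ω (2 * i - 2) (2 * j - 1) ^ 2 + ω (2 * i - 1) (2 * j - 2) ^ 2
        + 3 * ω (2 * i - 1) (2 * j - 1) ^ 2) with hSdef
  have hS : 0 ≤ S := by
    rw [hSdef]
    refine Finset.sum_nonneg fun i _ => Finset.sum_nonneg fun j _ => by positivity
  have hST : S ≤ 3 * T := by
    have hk := key J₁ J₂ ω hω
    calc S ≤ ∑ i ∈ Icc 1 J₁, ∑ j ∈ Icc 1 J₂,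
          3 * (ω (2*i-2) (2*j-1) ^ 2 + ω (2*i-1) (2*j-2) ^ 2 + ω (2*i-1) (2*j-1) ^ 2) := by
            rw [hSdef]
            refine Finset.sum_le_sum fun i _ => Finset.sum_le_sum fun j _ => ?_
            nlinarith [sq_nonneg (ω (2*i-2) (2*j-1)), sq_nonneg (ω (2*i-1) (2*j-2))]
      _ = 3 * ∑ i ∈ Icc 1 J₁, ∑ j ∈ Icc 1 J₂,
          (ω (2*i-2) (2*j-1) ^ 2 + ω (2*i-1) (2*j-2) ^ 2 + ω (2*i-1) (2*j-1) ^ 2) := by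
            simp [Finset.mul_sum]
      _ ≤ 3 * T := by rw [hTdef]; linarith
  have hNorm : gridNorm2 J₁ J₂ ω = Real.sqrt (h * T) := by
    unfold gridNorm2 gridIP2
    congr 2
    rw [hTdef]
    exact Finset.sum_congr rfl fun i _ => Finset.sum_congr rfl fun j _ => (sq _).symm
  have hE : gridNormE J₁ J₂ ω = 2 / 3 * Real.sqrt (h * S) := rfl
  have hhS : 0 ≤ h * S := mul_nonneg hh hS
  have hhT : 0 ≤ h * T := mul_nonneg hh hT
  have hhST : h * S ≤ 3 * (h * T) := by nlinarith
  have sqrt49 : ∀ x : ℝ, Real.sqrt (4 / 9 * x) = 2 / 3 * Real.sqrt x := by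
    intro x
    rw [show (4:ℝ)/9 = (2/3)^2 by norm_num, Real.sqrt_mul (sq_nonneg _),
      Real.sqrt_sq (by norm_num : (0:ℝ) ≤ 2/3)]
  have part1 : gridNormE J₁ J₂ ω ≤ 2 * Real.sqrt 3 / 3 * gridNorm2 J₁ J₂ ω := by
    rw [hE, hNorm]
    have h1 : Real.sqrt (h * S) ≤ Real.sqrt (3 * (h * T)) := Real.sqrt_le_sqrt hhST
    rw [Real.sqrt_mul (by norm_num : (0:ℝ) ≤ 3)] at h1
    calc 2 / 3 * Real.sqrt (h * S) ≤ 2 / 3 * (Real.sqrt 3 * Real.sqrt (h * T)) := by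
          linarith
      _ = 2 * Real.sqrt 3 / 3 * Real.sqrt (h * T) := by ring
  have hNsq : gridNorm2 J₁ J₂ ω ^ 2 = h * T := by
    rw [hNorm]; exact Real.sq_sqrt hhT
  have hEsq : gridNormE J₁ J₂ ω ^ 2 = 4 / 9 * (h * S) := by
    rw [hE, mul_pow, Real.sq_sqrt hhS]; norm_num
  have hFeq : gridNormF J₁ J₂ ω
      = Real.sqrt (4 / 9 * (h * T) + 4 / 9 * (h * S)) := by
    unfold gridNormF
    rw [hNsq, hEsq]
  refine ⟨part1, ?_, ?_⟩
  · rw [hFeq, hNorm, ← sqrt49 (h * T)]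
    exact Real.sqrt_le_sqrt (by nlinarith)
  · rw [hFeq, hNorm]
    have : Real.sqrt (4 / 9 * (h * T) + 4 / 9 * (h * S))
        ≤ Real.sqrt ((4/3)^2 * (h * T)) := Real.sqrt_le_sqrt (by nlinarith)
    rwa [Real.sqrt_mul (sq_nonneg _), Real.sqrt_sq (by norm_num : (0:ℝ) ≤ 4/3)] at this
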